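/- arXiv:2205.01046 — 2 statements merged into one kernel-verified Lean document; each statement's English description precedes it below -/
import Mathlib

section
/- Let K be a field of characteristic 2, A = K[x^{±1}, y^{±1}], and let Q be the 4×4 matrix over A with rows (0, 1, 1, x⁻¹y⁻¹), (y, 0, x⁻¹, 1), (x, y⁻¹, 0, 1), (1, x, y, 0). If α ∈ A is such that α · Id₄ = Qf + fQ for some f ∈ M₄(A), then α lies in the ideal of A generated by 1 + x⁻¹y⁻² and 1 + x⁻²y⁻¹ (the Jacobian ideal of W = x + y + x⁻¹y⁻¹). -/
noncomputable section

/-- The Laurent polynomial ring `K[x^{±1}, y^{±1}]`. -/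
abbrev LaurentTwo (K : Type*) [Field K] := AddMonoidAlgebra K (ℤ × ℤ)

/-- The monomial `x^i y^j` in `K[x^{±1}, y^{±1}]`. -/
def mon (K : Type*) [Field K] (i j : ℤ) : LaurentTwo K := AddMonoidAlgebra.single (i, j) 1

/-- The mirror matrix of `ℝP²`. -/
def Qrp2 (K : Type*) [Field K] : Matrix (Fin 4) (Fin 4) (LaurentTwo K) :=
  !![0,           1,            1,            mon K (-1) (-1);
     mon K 0 1,   0,            mon K (-1) 0, 1;
     mon K 1 0,   mon K 0 (-1), 0,            1;
     1,           mon K 1 0,    mon K 0 1,    0]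

set_option linter.unusedSectionVars false

section Aux

variable (K : Type*) [Field K] [CharP K 2]

lemma mon_mul' (i j k l : ℤ) : mon K i j * mon K k l = mon K (i+k) (j+l) := by
  simp [mon, AddMonoidAlgebra.single_mul_single, Prod.mk_add_mk]

lemma mon_zero' : mon K 0 0 = 1 := by
  simp [mon, AddMonoidAlgebra.one_def]; rfl

lemma add_self' (a : LaurentTwo K) : a + a = 0 := by
  have h2 : (2 : K) = 0 := CharTwo.two_eq_zero
  calc a + a = (2 : K) • a := (two_smul K a).symm
  _ = 0 := by rw [h2, zero_smul]

/-- The Jacobian ideal. -/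
def Jac : Ideal (LaurentTwo K) :=
  Ideal.span ({1 + mon K (-1) (-2), 1 + mon K (-2) (-1)} : Set (LaurentTwo K))

lemma mem1' (i j : ℤ) : mon K i j + mon K (i-1) (j-2) ∈ Jac K := by
  have h : mon K i j + mon K (i-1) (j-2) = mon K i j * (1 + mon K (-1) (-2)) := by
    rw [mul_add, mul_one, mon_mul', sub_eq_add_neg, sub_eq_add_neg]
  rw [h]
  exact Ideal.mul_mem_left _ _ (Ideal.subset_span (by simp))

lemma mem2' (i j : ℤ) : mon K i j + mon K (i-2) (j-1) ∈ Jac K := by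
  have h : mon K i j + mon K (i-2) (j-1) = mon K i j * (1 + mon K (-2) (-1)) := by
    rw [mul_add, mul_one, mon_mul', sub_eq_add_neg, sub_eq_add_neg]
  rw [h]
  exact Ideal.mul_mem_left _ _ (Ideal.subset_span (by simp))

lemma mem3' (i j : ℤ) : mon K i j + mon K (i+1) (j-1) ∈ Jac K := by
  have a := mem1' K (i+2) (j+1)
  have b := mem2' K (i+2) (j+1)
  rw [show i+2-1 = i+1 from by ring, show j+1-2 = j-1 from by ring] at a
  rw [show i+2-2 = i from by ring, show j+1-1 = j from by ring] at b
  have e : mon K i j + mon K (i+1) (j-1)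
      = (mon K (i+2) (j+1) + mon K (i+1) (j-1)) + (mon K (i+2) (j+1) + mon K i j) := by
    have := add_self' K (mon K (i+2) (j+1))
    linear_combination -this
  rw [e]; exact Ideal.add_mem _ a b

lemma mem30' (i j : ℤ) : mon K i j + mon K (i+3) j ∈ Jac K := by
  have a := mem2' K (i+3) j
  have b := mem3' K i j
  rw [show i+3-2 = i+1 from by ring] at a
  have e : mon K i j + mon K (i+3) j
      = (mon K (i+3) j + mon K (i+1) (j-1)) + (mon K i j + mon K (i+1) (j-1)) := by
    have := add_self' K (mon K (i+1) (j-1))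
    linear_combination -this
  rw [e]; exact Ideal.add_mem _ a b

/-- An auxiliary matrix commuting with `Qrp2` modulo the Jacobian ideal, of trace 1. -/
def Pmx : Matrix (Fin 4) (Fin 4) (LaurentTwo K) :=
  !![1,         0, mon K 1 0, 0;
     mon K 2 0, 0, 1,         0;
     0,         0, 0,         0;
     0,         0, 0,         0]

set_option maxHeartbeats 1000000 in
lemma entries_mem (i j : Fin 4) :
    (Pmx K * Qrp2 K + Qrp2 K * Pmx K) i j ∈ Jac K := by
  fin_cases i <;> fin_cases j <;>
    simp [Pmx, Qrp2, Matrix.mul_apply, Fin.sum_univ_four, Matrix.add_apply,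
      Matrix.vecHead, Matrix.vecTail, mon_mul'] <;>
    first
      | exact Ideal.zero_mem _
      | (rw [add_self' K]; exact Ideal.zero_mem _)
      | exact mem2' K 2 0
      | exact mem3' K 1 0
      | simpa [mon_zero'] using mem3' K 0 0
      | simpa [mon_zero'] using mem30' K 0 0
      | (rw [add_comm]; first
          | simpa [mon_zero'] using mem3' K 0 0
          | simpa using mem2' K 1 0
          | simpa using mem3' K 0 1
          | simpa using mem3' K 1 1
          | simpa using mem2' K 2 0)

end Aux

/-- If `α·Id₄` is exact, i.e. `α·Id₄ = Qf + fQ` for some `f ∈ M₄(A)`,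
then `α` lies in the Jacobian ideal of `W = x + y + x⁻¹y⁻¹`, the ideal generated by
`1 + x⁻¹y⁻²` and `1 + x⁻²y⁻¹`. -/
theorem scalar_exact_mem_jacobian (K : Type*) [Field K] [CharP K 2]
    (α : LaurentTwo K) (f : Matrix (Fin 4) (Fin 4) (LaurentTwo K))
    (h : α • (1 : Matrix (Fin 4) (Fin 4) (LaurentTwo K)) = Qrp2 K * f + f * Qrp2 K) :
    α ∈ Ideal.span ({1 + mon K (-1) (-2), 1 + mon K (-2) (-1)} : Set (LaurentTwo K)) := by
  have htr : Matrix.trace (Pmx K) = 1 := by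
    simp [Pmx, Matrix.trace, Fin.sum_univ_four, Matrix.diag, Matrix.vecHead, Matrix.vecTail]
  have key : α = Matrix.trace ((Pmx K * Qrp2 K + Qrp2 K * Pmx K) * f) := by
    have h1 : Matrix.trace (Pmx K * (α • (1 : Matrix (Fin 4) (Fin 4) (LaurentTwo K)))) = α := by
      rw [Matrix.mul_smul, Matrix.mul_one, Matrix.trace_smul, htr, smul_eq_mul, mul_one]
    rw [← h1, h, Matrix.mul_add, Matrix.trace_add, add_mul, Matrix.trace_add]
    refine congrArg₂ (· + ·) ?_ ?_
    · rw [Matrix.mul_assoc]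
    · calc Matrix.trace (Pmx K * (f * Qrp2 K))
          = Matrix.trace ((Pmx K * f) * Qrp2 K) := by rw [Matrix.mul_assoc]
        _ = Matrix.trace (Qrp2 K * (Pmx K * f)) := Matrix.trace_mul_comm _ _
        _ = Matrix.trace (Qrp2 K * Pmx K * f) := by rw [Matrix.mul_assoc]
  have expand : Matrix.trace ((Pmx K * Qrp2 K + Qrp2 K * Pmx K) * f)
      = ∑ i : Fin 4, ∑ j : Fin 4, (Pmx K * Qrp2 K + Qrp2 K * Pmx K) i j * f j i := by
    simp [Matrix.trace, Matrix.mul_apply, Matrix.diag]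
  rw [show Ideal.span ({1 + mon K (-1) (-2), 1 + mon K (-2) (-1)} : Set (LaurentTwo K)) = Jac K from rfl]
  rw [key, expand]
  exact Ideal.sum_mem _ fun i _ => Ideal.sum_mem _ fun j _ =>
    Ideal.mul_mem_right _ _ (entries_mem K i j)

end
end

section
/- Let K be a field of characteristic 2, A = K[x^{±1}, y^{±1}], U the 2×2 matrix over A with rows (0, 1) and (y, 0), and Q the 4×4 matrix over A with rows (0, 1, 1, x⁻¹y⁻¹), (y, 0, x⁻¹, 1), (x, y⁻¹, 0, 1), (1, x, y, 0). Suppose f ∈ M₄(A) satisfies Qf + fQ = 0, and write f in 2×2 blocks as f = [[A, B], [C, D]]. Then there exist S, T ∈ M₂(A) such that D = A + (UT + TU) and C = x·B + (US + SU). -/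
noncomputable section

/-- The matrix `U = [[0, 1], [y, 0]]`. -/
def Umat (K : Type*) [Field K] : Matrix (Fin 2) (Fin 2) (LaurentTwo K) :=
  !![0, 1; mon K 0 1, 0]

/-- The matrix `V = Id₂ + x⁻¹y⁻¹·U = [[1, x⁻¹y⁻¹], [x⁻¹, 1]]`. -/
def Vmat (K : Type*) [Field K] : Matrix (Fin 2) (Fin 2) (LaurentTwo K) :=
  !![1, mon K (-1) (-1); mon K (-1) 0, 1]

/-- The mirror matrix `Q` of `ℝP²`, written in `2×2` blocks as `Q = [[U, V], [xV, U]]`. -/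
def Qblk (K : Type*) [Field K] :
    Matrix (Fin 2 ⊕ Fin 2) (Fin 2 ⊕ Fin 2) (LaurentTwo K) :=
  Matrix.fromBlocks (Umat K) (Vmat K) (mon K 1 0 • Vmat K) (Umat K)

lemma mon_mul (K : Type*) [Field K] (a b c d : ℤ) :
    mon K a b * mon K c d = mon K (a+c) (b+d) := by
  simp [mon, AddMonoidAlgebra.single_mul_single, Prod.mk_add_mk]

lemma mon00 (K : Type*) [Field K] : mon K 0 0 = 1 := rfl

lemma mon_ne (K : Type*) [Field K] : mon K 1 0 * mon K 0 1 * mon K 0 1 - 1 ≠ 0 := by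
  rw [sub_ne_zero, mon_mul, mon_mul]
  norm_num
  intro h
  have := congrArg (fun p : LaurentTwo K => p.coeff (1,2)) h
  simp [mon, AddMonoidAlgebra.coeff_single, Finsupp.single_apply, AddMonoidAlgebra.one_def, Prod.ext_iff] at this

lemma two_zero (K : Type*) [Field K] [CharP K 2] : (2 : LaurentTwo K) = 0 := by
  haveI : CharP (LaurentTwo K) 2 :=
    charP_of_injective_algebraMap (R := K) (A := LaurentTwo K)
      (fun a b h => by
        have := congrArg (fun p : LaurentTwo K => p.coeff (0,0)) h
        simpa [AddMonoidAlgebra.coe_algebraMap, AddMonoidAlgebra.coeff_single, Finsupp.single_apply, Prod.ext_iff] using this) 2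
  exact CharTwo.two_eq_zero

lemma key {R : Type*} [CommRing R] [NoZeroDivisors R]
    (X Y W Xi Yi a00 a01 a10 a11 b00 b01 b10 b11 c00 c01 c10 c11 d00 d01 d10 d11 : R)
    (h2 : (2:R) = 0)
    (hXXi : X * Xi = 1) (hYYi : Y * Yi = 1) (hXW : X * W = Yi) (hYW : Y * W = Xi)
    (hXYW : X*Y*W = 1) (hnz : X*Y*Y - 1 ≠ 0)
    (e1 : a10 + c00 + W*c10 + Y*a01 + X*b00 + b01 = 0)
    (e2 : a11 + c01 + W*c11 + a00 + Yi*b00 + X*b01 = 0)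
    (e3 : b10 + d00 + W*d10 + a00 + Xi*a01 + Y*b01 = 0)
    (e4 : b11 + d01 + W*d11 + W*a00 + a01 + b00 = 0)
    (e5 : X*a00 + Yi*a10 + c10 + Y*c01 + X*d00 + d01 = 0)
    (e6 : X*a01 + Yi*a11 + c11 + c00 + Yi*d00 + X*d01 = 0)
    (e7 : X*b00 + Yi*b10 + d10 + c00 + Xi*c01 + Y*d01 = 0)
    (e8 : X*b01 + Yi*b11 + d11 + W*c00 + c01 + d00 = 0) :
    (a10 + d10 + Y*(a01 + d01) = 0) ∧ (a00 + d00 + a11 + d11 = 0) ∧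
    (c10 + X*b10 + Y*(c01 + X*b01) = 0) ∧ (c00 + X*b00 + c11 + X*b11 = 0) := by
  set m1 : R := a10 + d10 + Y*(a01 + d01) with hm1def
  set m2 : R := a00 + d00 + a11 + d11 with hm2def
  set n1 : R := c10 + X*b10 + Y*(c01 + X*b01) with hn1def
  set n2 : R := c00 + X*b00 + c11 + X*b11 with hn2def
  have hR1 : m1 + W*n1 = 0 := by
    rw [hm1def, hn1def]
    linear_combination e1 + e7 - (c00 + X*b00)*h2 + b10*hXW + c01*hYW + b01*hXYW
  have hR2 : m2 + W*n2 = 0 := by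
    rw [hm2def, hn2def]
    linear_combination e2 + e8 + (b00+b11)*hXW - (c01 + X*b01)*h2
  have hR3 : n1 + Yi*m1 = 0 := by
    rw [hm1def, hn1def]
    linear_combination X*e3 + e5 - d10*hXW + (a01 + d01)*hYYi - a01*hXXi - (X*a00 + X*d00)*h2
  have hR4 : n2 + Yi*m2 = 0 := by
    rw [hm2def, hn2def]
    linear_combination X*e4 + e6 - (a00 + d11)*hXW - (X*a01 + X*d01)*h2
  have hZ1 : (X*Y*Y - 1) * m1 = 0 := by
    linear_combination (X*Y*Y)*hR1 - (X*Y*Y*W)*hR3 + (m1*Y*Y*Yi)*hXW + (m1*(Y*Yi+1))*hYYi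
  have hZ2 : (X*Y*Y - 1) * m2 = 0 := by
    linear_combination (X*Y*Y)*hR2 - (X*Y*Y*W)*hR4 + (m2*Y*Y*Yi)*hXW + (m2*(Y*Yi+1))*hYYi
  have hm1 : m1 = 0 := (mul_eq_zero.mp hZ1).resolve_left hnz
  have hm2 : m2 = 0 := (mul_eq_zero.mp hZ2).resolve_left hnz
  have hn1 : n1 = 0 := by linear_combination hR3 - Yi*hm1
  have hn2 : n2 = 0 := by linear_combination hR4 - Yi*hm2
  exact ⟨hm1, hm2, hn1, hn2⟩

/-- If `f ∈ M₄(A)`, written in `2×2` blocks as `f = [[A, B], [C, D]]`,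
satisfies `Qf + fQ = 0`, then there are `S, T ∈ M₂(A)` with `D = A + (UT + TU)` and
`C = x·B + (US + SU)`. -/
theorem closed_block_structure (K : Type*) [Field K] [CharP K 2]
    (f : Matrix (Fin 2 ⊕ Fin 2) (Fin 2 ⊕ Fin 2) (LaurentTwo K))
    (hf : Qblk K * f + f * Qblk K = 0) :
    ∃ S T : Matrix (Fin 2) (Fin 2) (LaurentTwo K),
      f.toBlocks₂₂ = f.toBlocks₁₁ + (Umat K * T + T * Umat K) ∧
      f.toBlocks₂₁ = mon K 1 0 • f.toBlocks₁₂ + (Umat K * S + S * Umat K) := by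
  have h2 : (2 : LaurentTwo K) = 0 := two_zero K
  have E : ∀ p q, (Qblk K * f) p q + (f * Qblk K) p q = 0 := by
    intro p q
    calc (Qblk K * f) p q + (f * Qblk K) p q = (Qblk K * f + f * Qblk K) p q := rfl
    _ = 0 := by rw [hf]; rfl
  have hXXi : mon K 1 0 * mon K (-1) 0 = 1 := by rw [mon_mul]; norm_num [mon00]
  have hYYi : mon K 0 1 * mon K 0 (-1) = 1 := by rw [mon_mul]; norm_num [mon00]
  have hXW : mon K 1 0 * mon K (-1) (-1) = mon K 0 (-1) := by rw [mon_mul]; norm_num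
  have hYW : mon K 0 1 * mon K (-1) (-1) = mon K (-1) 0 := by rw [mon_mul]; norm_num
  have hXYW : mon K 1 0 * mon K 0 1 * mon K (-1) (-1) = 1 := by
    rw [mon_mul, mon_mul]; norm_num [mon00]
  have e1 : f (.inl 1) (.inl 0) + f (.inr 0) (.inl 0) + mon K (-1) (-1) * f (.inr 1) (.inl 0)
      + mon K 0 1 * f (.inl 0) (.inl 1) + mon K 1 0 * f (.inl 0) (.inr 0)
      + f (.inl 0) (.inr 1) = 0 := by
    have h := E (Sum.inl 0) (Sum.inl 0)
    simp [Qblk, Umat, Vmat, Matrix.mul_apply, Matrix.fromBlocks, Fintype.sum_sum_type,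
      Fin.sum_univ_two, Matrix.smul_apply, smul_eq_mul, mon_mul, mon00] at h
    linear_combination h
  have e2 : f (.inl 1) (.inl 1) + f (.inr 0) (.inl 1) + mon K (-1) (-1) * f (.inr 1) (.inl 1)
      + f (.inl 0) (.inl 0) + mon K 0 (-1) * f (.inl 0) (.inr 0)
      + mon K 1 0 * f (.inl 0) (.inr 1) = 0 := by
    have h := E (Sum.inl 0) (Sum.inl 1)
    simp [Qblk, Umat, Vmat, Matrix.mul_apply, Matrix.fromBlocks, Fintype.sum_sum_type,
      Fin.sum_univ_two, Matrix.smul_apply, smul_eq_mul, mon_mul, mon00] at h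
    linear_combination h
  have e3 : f (.inl 1) (.inr 0) + f (.inr 0) (.inr 0) + mon K (-1) (-1) * f (.inr 1) (.inr 0)
      + f (.inl 0) (.inl 0) + mon K (-1) 0 * f (.inl 0) (.inl 1)
      + mon K 0 1 * f (.inl 0) (.inr 1) = 0 := by
    have h := E (Sum.inl 0) (Sum.inr 0)
    simp [Qblk, Umat, Vmat, Matrix.mul_apply, Matrix.fromBlocks, Fintype.sum_sum_type,
      Fin.sum_univ_two, Matrix.smul_apply, smul_eq_mul, mon_mul, mon00] at h
    linear_combination h
  have e4 : f (.inl 1) (.inr 1) + f (.inr 0) (.inr 1) + mon K (-1) (-1) * f (.inr 1) (.inr 1)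
      + mon K (-1) (-1) * f (.inl 0) (.inl 0) + f (.inl 0) (.inl 1)
      + f (.inl 0) (.inr 0) = 0 := by
    have h := E (Sum.inl 0) (Sum.inr 1)
    simp [Qblk, Umat, Vmat, Matrix.mul_apply, Matrix.fromBlocks, Fintype.sum_sum_type,
      Fin.sum_univ_two, Matrix.smul_apply, smul_eq_mul, mon_mul, mon00] at h
    linear_combination h
  have e5 : mon K 1 0 * f (.inl 0) (.inl 0) + mon K 0 (-1) * f (.inl 1) (.inl 0)
      + f (.inr 1) (.inl 0) + mon K 0 1 * f (.inr 0) (.inl 1)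
      + mon K 1 0 * f (.inr 0) (.inr 0) + f (.inr 0) (.inr 1) = 0 := by
    have h := E (Sum.inr 0) (Sum.inl 0)
    simp [Qblk, Umat, Vmat, Matrix.mul_apply, Matrix.fromBlocks, Fintype.sum_sum_type,
      Fin.sum_univ_two, Matrix.smul_apply, smul_eq_mul, mon_mul, mon00] at h
    linear_combination h
  have e6 : mon K 1 0 * f (.inl 0) (.inl 1) + mon K 0 (-1) * f (.inl 1) (.inl 1)
      + f (.inr 1) (.inl 1) + f (.inr 0) (.inl 0)
      + mon K 0 (-1) * f (.inr 0) (.inr 0) + mon K 1 0 * f (.inr 0) (.inr 1) = 0 := by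
    have h := E (Sum.inr 0) (Sum.inl 1)
    simp [Qblk, Umat, Vmat, Matrix.mul_apply, Matrix.fromBlocks, Fintype.sum_sum_type,
      Fin.sum_univ_two, Matrix.smul_apply, smul_eq_mul, mon_mul, mon00] at h
    linear_combination h
  have e7 : mon K 1 0 * f (.inl 0) (.inr 0) + mon K 0 (-1) * f (.inl 1) (.inr 0)
      + f (.inr 1) (.inr 0) + f (.inr 0) (.inl 0)
      + mon K (-1) 0 * f (.inr 0) (.inl 1) + mon K 0 1 * f (.inr 0) (.inr 1) = 0 := by
    have h := E (Sum.inr 0) (Sum.inr 0)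
    simp [Qblk, Umat, Vmat, Matrix.mul_apply, Matrix.fromBlocks, Fintype.sum_sum_type,
      Fin.sum_univ_two, Matrix.smul_apply, smul_eq_mul, mon_mul, mon00] at h
    linear_combination h
  have e8 : mon K 1 0 * f (.inl 0) (.inr 1) + mon K 0 (-1) * f (.inl 1) (.inr 1)
      + f (.inr 1) (.inr 1) + mon K (-1) (-1) * f (.inr 0) (.inl 0)
      + f (.inr 0) (.inl 1) + f (.inr 0) (.inr 0) = 0 := by
    have h := E (Sum.inr 0) (Sum.inr 1)
    simp [Qblk, Umat, Vmat, Matrix.mul_apply, Matrix.fromBlocks, Fintype.sum_sum_type,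
      Fin.sum_univ_two, Matrix.smul_apply, smul_eq_mul, mon_mul, mon00] at h
    linear_combination h
  obtain ⟨hm1, hm2, hn1, hn2⟩ :=
    key (mon K 1 0) (mon K 0 1) (mon K (-1) (-1)) (mon K (-1) 0) (mon K 0 (-1))
      (f (.inl 0) (.inl 0)) (f (.inl 0) (.inl 1)) (f (.inl 1) (.inl 0)) (f (.inl 1) (.inl 1))
      (f (.inl 0) (.inr 0)) (f (.inl 0) (.inr 1)) (f (.inl 1) (.inr 0)) (f (.inl 1) (.inr 1))
      (f (.inr 0) (.inl 0)) (f (.inr 0) (.inl 1)) (f (.inr 1) (.inl 0)) (f (.inr 1) (.inl 1))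
      (f (.inr 0) (.inr 0)) (f (.inr 0) (.inr 1)) (f (.inr 1) (.inr 0)) (f (.inr 1) (.inr 1))
      h2 hXXi hYYi hXW hYW hXYW (mon_ne K) e1 e2 e3 e4 e5 e6 e7 e8
  refine ⟨!![f (.inr 0) (.inl 1) + mon K 1 0 * f (.inl 0) (.inr 1), 0;
             f (.inr 0) (.inl 0) + mon K 1 0 * f (.inl 0) (.inr 0), 0],
          !![f (.inl 0) (.inl 1) + f (.inr 0) (.inr 1), 0;
             f (.inl 0) (.inl 0) + f (.inr 0) (.inr 0), 0], ?_, ?_⟩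
  · rw [← Matrix.ext_iff]; intro i j
    fin_cases i <;> fin_cases j <;>
      simp [Matrix.toBlocks₁₁, Matrix.toBlocks₂₂, Matrix.mul_apply, Fin.sum_univ_two, Umat,
        Matrix.add_apply]
    · linear_combination (-(f (.inl 0) (.inl 0))) * h2
    · linear_combination (-(f (.inl 0) (.inl 1))) * h2
    · linear_combination hm1 - (f (.inl 1) (.inl 0) + mon K 0 1 * f (.inl 0) (.inl 1)
        + mon K 0 1 * f (.inr 0) (.inr 1)) * h2
    · linear_combination hm2 - (f (.inl 1) (.inl 1) + f (.inl 0) (.inl 0)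
        + f (.inr 0) (.inr 0)) * h2
  · rw [← Matrix.ext_iff]; intro i j
    fin_cases i <;> fin_cases j <;>
      simp [Matrix.toBlocks₁₂, Matrix.toBlocks₂₁, Matrix.mul_apply, Fin.sum_univ_two, Umat,
        Matrix.add_apply, Matrix.smul_apply, smul_eq_mul]
    · linear_combination (-(mon K 1 0 * f (.inl 0) (.inr 0))) * h2
    · linear_combination (-(mon K 1 0 * f (.inl 0) (.inr 1))) * h2
    · linear_combination hn1 - (mon K 1 0 * f (.inl 1) (.inr 0)
        + mon K 0 1 * f (.inr 0) (.inl 1)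
        + mon K 0 1 * (mon K 1 0 * f (.inl 0) (.inr 1))) * h2
    · linear_combination hn2 - (mon K 1 0 * f (.inl 1) (.inr 1) + f (.inr 0) (.inl 0)
        + mon K 1 0 * f (.inl 0) (.inr 0)) * h2

end
end
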